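/- Logarithmic counting bound (10.2(G)): For all integers 1 ≤ q ≤ p, ln(c(p,q)) ≤ q · ln(11·p/q), the inequality being between real numbers (note that c(p,q) ≥ 1 since the zero function belongs to E(p,q)). -/

import Mathlib

/-- `E(p,q)`: integer-valued functions on `{1,…,q}` with zero sum and `ℓ¹`-norm at
most `p`. -/
def Eset (p q : ℕ) : Set (Fin q → ℤ) :=
  {f | ∑ j, f j = 0 ∧ ∑ j, |f j| ≤ (p : ℤ)}

lemma step_exp (q : ℕ) (hq : 1 ≤ q) : ((q:ℝ)+1)^q ≤ Real.exp 1 * q^q := by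
  have hq0 : (0:ℝ) < q := by exact_mod_cast hq
  have h1 : (1/(q:ℝ)) + 1 ≤ Real.exp (1/q) := Real.add_one_le_exp _
  have h2 : ((1/(q:ℝ)) + 1)^q ≤ Real.exp (1/q) ^ q :=
    pow_le_pow_left₀ (by positivity) h1 q
  have h3 : Real.exp (1/(q:ℝ)) ^ q = Real.exp 1 := by
    rw [← Real.exp_nat_mul]; congr 1; field_simp
  have h4 : ((q:ℝ)+1)^q = q^q * ((1/(q:ℝ)) + 1)^q := by
    rw [← mul_pow]; congr 1; field_simp; ring
  rw [h4]
  calc (q:ℝ)^q * ((1/(q:ℝ)) + 1)^q ≤ q^q * Real.exp 1 :=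
        mul_le_mul_of_nonneg_left (h3 ▸ h2) (by positivity)
    _ = Real.exp 1 * q^q := by ring

lemma fact_lower : ∀ q : ℕ, (q:ℝ)^q ≤ Real.exp q * q.factorial := by
  intro q
  induction q with
  | zero => simp
  | succ q ih =>
    rcases Nat.eq_zero_or_pos q with h0 | hq
    · subst h0
      simp
    have hstep := step_exp q hq
    have hq1 : (0:ℝ) ≤ (q:ℝ) + 1 := by positivity
    push_cast
    calc ((q:ℝ)+1)^(q+1) = ((q:ℝ)+1)^q * ((q:ℝ)+1) := by ring
      _ ≤ (Real.exp 1 * q^q) * ((q:ℝ)+1) := by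
          exact mul_le_mul_of_nonneg_right hstep hq1
      _ ≤ (Real.exp 1 * (Real.exp q * q.factorial)) * ((q:ℝ)+1) := by
          apply mul_le_mul_of_nonneg_right _ hq1
          exact mul_le_mul_of_nonneg_left ih (Real.exp_pos 1).le
      _ = Real.exp ((q:ℝ)+1) * (((q+1) : ℕ).factorial : ℝ) := by
          rw [Real.exp_add, Nat.factorial_succ]
          push_cast
          ring

lemma card_finset_sum {ι α : Type*} (s : Finset ι) (f : ι → Multiset α) :
    Multiset.card (∑ i ∈ s, f i) = ∑ i ∈ s, Multiset.card (f i) := by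
  classical
  induction s using Finset.induction with
  | empty => simp
  | insert _ _ h ih => simp [Finset.sum_insert h, ih]

lemma card_bound (p q : ℕ) :
    Nat.card (Eset p q) ≤ (q + p).choose q * 2 ^ q := by
  classical
  set T := Sym (Fin (q+1)) p × (Fin q → Bool)
  have hSnat : ∀ f : Fin q → ℤ, f ∈ Eset p q → ∑ j, (f j).natAbs ≤ p := by
    intro f hf
    have h2 := hf.2
    have h3 : ∑ j, |f j| = ((∑ j, (f j).natAbs : ℕ) : ℤ) := by
      rw [Nat.cast_sum]
      exact Finset.sum_congr rfl fun j _ => Int.abs_eq_natAbs _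
    rw [h3] at h2
    exact_mod_cast h2
  -- the multiset
  let m : (Fin q → ℤ) → Multiset (Fin (q+1)) := fun f =>
    (∑ j : Fin q, Multiset.replicate (f j).natAbs j.castSucc) +
      Multiset.replicate (p - ∑ j, (f j).natAbs) (Fin.last q)
  have hcount : ∀ (f : Fin q → ℤ) (i : Fin q),
      Multiset.count i.castSucc (m f) = (f i).natAbs := by
    intro f i
    have hne : i.castSucc ≠ Fin.last q := (Fin.castSucc_lt_last i).ne
    simp only [m, Multiset.count_add, Multiset.count_sum', Multiset.count_replicate]
    rw [if_neg (fun h => hne (Eq.symm h)), add_zero, Finset.sum_eq_single i]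
    · simp
    · intro b _ hb
      rw [if_neg (fun h => hb (Fin.castSucc_injective q h))]
    · simp
  have hcard : ∀ f ∈ Eset p q, Multiset.card (m f) = p := by
    intro f hf
    simp only [m, Multiset.card_add, Multiset.card_replicate, card_finset_sum]
    exact Nat.add_sub_cancel' (hSnat f hf)
  let F : Eset p q → T := fun x =>
    (⟨m x.1, hcard x.1 x.2⟩, fun j => decide (x.1 j < 0))
  have hFinj : Function.Injective F := by
    intro x y h
    obtain ⟨h1, h2⟩ := Prod.mk.injEq .. ▸ h
    have hm : m x.1 = m y.1 := congrArg Subtype.val h1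
    apply Subtype.ext; funext j
    have hc : (x.1 j).natAbs = (y.1 j).natAbs := by
      rw [← hcount x.1 j, ← hcount y.1 j, hm]
    have hb : (x.1 j < 0) ↔ (y.1 j < 0) := by
      have := congrFun h2 j
      simpa [decide_eq_decide] using this
    omega
  calc Nat.card (Eset p q) ≤ Nat.card T := Nat.card_le_card_of_injective F hFinj
    _ = (q + p).choose q * 2 ^ q := by
        rw [Nat.card_eq_fintype_card, Fintype.card_prod, Sym.card_sym_eq_choose]
        congr 1
        · rw [Fintype.card_fin]
          rw [show q + 1 + p - 1 = q + p by omega]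
          rw [← Nat.choose_symm (Nat.le_add_left p q)]
          congr 1
          omega
        · simp [Fintype.card_fun]

lemma Eset_finite (p q : ℕ) : (Eset p q).Finite := by
  apply Set.Finite.subset (Set.Finite.pi (fun _ : Fin q => Set.finite_Icc (-(p:ℤ)) p))
  intro f hf
  simp only [Set.mem_pi, Set.mem_univ, Set.mem_Icc, forall_true_left]
  intro j
  have h : |f j| ≤ (p:ℤ) :=
    le_trans (Finset.single_le_sum (fun i _ => abs_nonneg (f i)) (Finset.mem_univ j)) hf.2
  exact abs_le.mp h

/-- Logarithmic counting bound (10.2(G)): for `1 ≤ q ≤ p`,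
`ln c(p,q) ≤ q · ln(11p/q)`. -/
theorem stmt17 (p q : ℕ) (hq : 1 ≤ q) (hqp : q ≤ p) :
    Real.log (Nat.card ↥(Eset p q)) ≤ q * Real.log (11 * p / q) := by
  have hfin : Finite ↥(Eset p q) := (Eset_finite p q).to_subtype
  have hne : Nonempty ↥(Eset p q) := ⟨⟨0, by constructor <;> simp⟩⟩
  have hN1 : 1 ≤ Nat.card ↥(Eset p q) := Nat.card_pos
  set N := Nat.card ↥(Eset p q) with hNdef
  set C := (q + p).choose q with hCdef
  have hq0 : (0:ℝ) < q := by exact_mod_cast hq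
  have hp0 : (0:ℝ) < p := by exact_mod_cast lt_of_lt_of_le hq hqp
  have hqpR : (q:ℝ) ≤ p := by exact_mod_cast hqp
  set E1 := Real.exp 1 with hE1def
  have hE0 : (0:ℝ) < E1 := Real.exp_pos 1
  have hE : E1 < 2.7182818286 := Real.exp_one_lt_d9
  have hEq : Real.exp (q:ℝ) = E1 ^ q := by
    rw [hE1def, ← Real.exp_nat_mul, mul_one]
  have hfac : (q:ℝ)^q ≤ E1^q * q.factorial := by
    have := fact_lower q
    rwa [hEq] at this
  have hdesc : (C:ℝ) * q.factorial ≤ ((q:ℝ) + p)^q := by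
    have h1 : q.factorial * C ≤ (q + p)^q := by
      rw [hCdef, ← Nat.descFactorial_eq_factorial_mul_choose]
      exact Nat.descFactorial_le_pow _ _
    have h2 : ((q.factorial * C : ℕ) : ℝ) ≤ (((q + p)^q : ℕ) : ℝ) := by exact_mod_cast h1
    push_cast at h2
    linarith
  have hfactpos : (0:ℝ) < q.factorial := by exact_mod_cast q.factorial_pos
  have hC : (C:ℝ) ≤ ((q:ℝ) + p)^q * E1^q / q^q := by
    rw [le_div_iff₀ (by positivity)]
    have hCnn : (0:ℝ) ≤ C := Nat.cast_nonneg C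
    nlinarith [mul_le_mul_of_nonneg_left hfac hCnn,
      mul_le_mul_of_nonneg_left hdesc (pow_nonneg hE0.le q)]
  have hNC : (N:ℝ) ≤ (C:ℝ) * 2^q := by
    have := card_bound p q
    have h2 : (N:ℝ) ≤ ((C * 2^q : ℕ) : ℝ) := by exact_mod_cast this
    push_cast at h2
    linarith
  have hreal : (N:ℝ) ≤ (11 * p / q)^q := by
    calc (N:ℝ) ≤ (C:ℝ) * 2^q := hNC
      _ ≤ (((q:ℝ) + p)^q * E1^q / q^q) * 2^q :=
          mul_le_mul_of_nonneg_right hC (by positivity)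
      _ = (2*((q:ℝ)+p)*E1/(q:ℝ))^q := by
          rw [div_pow, mul_pow, mul_pow]
          ring
      _ ≤ (11 * p / q)^q := by
          apply pow_le_pow_left₀ (by positivity)
          apply div_le_div_of_nonneg_right ?_ hq0.le
          nlinarith
  have hNpos : (0:ℝ) < N := by exact_mod_cast hN1
  calc Real.log (N:ℝ) ≤ Real.log ((11 * p / q)^q) := Real.log_le_log hNpos hreal
    _ = q * Real.log (11 * p / q) := by rw [Real.log_pow]
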